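/- Special soundness of the ownership-verification Σ-protocol: Let G be a finite commutative group whose cardinality is a prime q. Let g, Yt, C1, C2 ∈ G and let r1, r2, c, r1', r2', c' be integers such that q does not divide c − c'. If g^{r1} · C1^{c} = g^{r1'} · C1^{c'} and Yt^{r1} · g^{r2} · C2^{c} = Yt^{r1'} · g^{r2'} · C2^{c'} (two accepting transcripts with the same commitments V1, V2 but distinct challenges), then there exist integers k and x such that C1 = g^{k} and C2 = Yt^{k} · g^{x}. -/

import Mathlib

/-- Special soundness of the ownership-verification Σ-protocol. -/
theorem pplist_ownership_special_soundness
    {G : Type*} [CommGroup G] [Fintype G] (q : ℕ) (hq : q.Prime)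
    (hcard : Fintype.card G = q)
    (g Yt C1 C2 : G) (r1 r2 c r1' r2' c' : ℤ)
    (hc : ¬ ((q : ℤ) ∣ (c - c')))
    (h1 : g ^ r1 * C1 ^ c = g ^ r1' * C1 ^ c')
    (h2 : Yt ^ r1 * g ^ r2 * C2 ^ c = Yt ^ r1' * g ^ r2' * C2 ^ c') :
    ∃ k x : ℤ, C1 = g ^ k ∧ C2 = Yt ^ k * g ^ x := by
  -- every element satisfies a ^ q = 1
  have hq1 : ∀ a : G, a ^ (q : ℤ) = 1 := by
    intro a
    rw [zpow_natCast, ← hcard, pow_card_eq_one]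
  -- Bézout: u * (c - c') + v * q = 1
  have hcop : IsCoprime (c - c') (q : ℤ) := by
    rw [Int.isCoprime_iff_gcd_eq_one]
    by_contra hne
    have hdvd : (Int.gcd (c - c') q : ℤ) ∣ (q : ℤ) := Int.gcd_dvd_right _ _
    rcases (Nat.Prime.eq_one_or_self_of_dvd hq _ (Int.ofNat_dvd.mp (by exact_mod_cast hdvd))) with h | h
    · exact hne h
    · apply hc
      have := Int.gcd_dvd_left (a := c - c') (b := (q : ℤ))
      rwa [h] at this
  obtain ⟨u, v, huv⟩ := hcop
  -- extract discrete-log relations from the two transcripts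
  have e1 : C1 ^ (c - c') = g ^ (r1' - r1) := by
    have key : C1 ^ (c - c') * (g ^ r1 * C1 ^ c') = g ^ (r1' - r1) * (g ^ r1 * C1 ^ c') := by
      calc C1 ^ (c - c') * (g ^ r1 * C1 ^ c')
          = g ^ r1 * (C1 ^ (c - c') * C1 ^ c') := by
            simp [mul_comm, mul_left_comm, mul_assoc]
        _ = g ^ r1 * C1 ^ c := by rw [← zpow_add, sub_add_cancel]
        _ = g ^ r1' * C1 ^ c' := h1
        _ = (g ^ (r1' - r1) * g ^ r1) * C1 ^ c' := by rw [← zpow_add, sub_add_cancel]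
        _ = g ^ (r1' - r1) * (g ^ r1 * C1 ^ c') := by rw [mul_assoc]
    exact mul_right_cancel key
  have e2 : C2 ^ (c - c') = Yt ^ (r1' - r1) * g ^ (r2' - r2) := by
    have key : C2 ^ (c - c') * (Yt ^ r1 * g ^ r2 * C2 ^ c')
        = (Yt ^ (r1' - r1) * g ^ (r2' - r2)) * (Yt ^ r1 * g ^ r2 * C2 ^ c') := by
      calc C2 ^ (c - c') * (Yt ^ r1 * g ^ r2 * C2 ^ c')
          = Yt ^ r1 * g ^ r2 * (C2 ^ (c - c') * C2 ^ c') := by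
            simp [mul_comm, mul_left_comm, mul_assoc]
        _ = Yt ^ r1 * g ^ r2 * C2 ^ c := by rw [← zpow_add, sub_add_cancel]
        _ = Yt ^ r1' * g ^ r2' * C2 ^ c' := h2
        _ = (Yt ^ (r1' - r1) * Yt ^ r1) * (g ^ (r2' - r2) * g ^ r2) * C2 ^ c' := by
            rw [← zpow_add, ← zpow_add, sub_add_cancel, sub_add_cancel]
        _ = (Yt ^ (r1' - r1) * g ^ (r2' - r2)) * (Yt ^ r1 * g ^ r2 * C2 ^ c') := by
            simp [mul_comm, mul_left_comm, mul_assoc]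
    exact mul_right_cancel key
  refine ⟨u * (r1' - r1), u * (r2' - r2), ?_, ?_⟩
  · calc C1 = C1 ^ (u * (c - c') + v * q) := by rw [huv, zpow_one]
      _ = (C1 ^ (c - c')) ^ u * (C1 ^ (q : ℤ)) ^ v := by
          rw [zpow_add, mul_comm u, mul_comm v, zpow_mul, zpow_mul]
      _ = g ^ (u * (r1' - r1)) := by
          rw [e1, hq1, one_zpow, mul_one, ← zpow_mul, mul_comm]
  · calc C2 = C2 ^ (u * (c - c') + v * q) := by rw [huv, zpow_one]
      _ = (C2 ^ (c - c')) ^ u * (C2 ^ (q : ℤ)) ^ v := by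
          rw [zpow_add, mul_comm u, mul_comm v, zpow_mul, zpow_mul]
      _ = Yt ^ (u * (r1' - r1)) * g ^ (u * (r2' - r2)) := by
          rw [e2, hq1, one_zpow, mul_one, mul_zpow, ← zpow_mul, ← zpow_mul,
            mul_comm (r1' - r1), mul_comm (r2' - r2)]
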